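/- arXiv:2111.01044 — 6 statements merged into one kernel-verified Lean document; each statement's English description precedes it below -/
import Mathlib

section
/- Let θ ∈ ℂ and let K be an imaginary quadratic field regarded as a subfield of ℂ with ring of integers 𝓞_K. Suppose k₀, ℓ₀ > 0 and E, Q > 1 are real numbers with 2ℓ₀E ≥ 1, and that for each integer r ≥ 0 there are p_r, q_r ∈ 𝓞_K satisfying p_r·q_{r+1} ≠ p_{r+1}·q_r, |q_r| < k₀·Q^r and |q_r·θ − p_r| ≤ ℓ₀·E^{−r}. Put κ = log Q / log E and c = 2k₀·(2ℓ₀E)^κ. Then for all p, q ∈ 𝓞_K with q ≠ 0 such that p/q ≠ p_r/q_r for every integer r ≥ 0 (interpreted as p·q_r ≠ p_r·q), we have |θ − p/q| > 1/(c·|q|^{κ+1}). -/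
open Finset MeasureTheory

noncomputable section

/-- Coefficient of `z^k` in `X_{m,n,r}(z) = ₂F₁(-r, -r-m/n; 1-m/n; z)`. -/
def Xcoef (m n r k : ℕ) : ℚ :=
  (r.choose k : ℚ) * ∏ j ∈ Finset.range k, ((((r : ℚ) - j) * n + m) / (((j : ℚ) + 1) * n - m))

/-- `X_{m,n,r}` as a function on `ℂ`. -/
def Xfun (m n r : ℕ) (z : ℂ) : ℂ :=
  ∑ k ∈ Finset.range (r + 1), (Xcoef m n r k : ℂ) * z ^ k

/-- `Y_{m,n,r}(z) = z^r · X_{m,n,r}(1/z)` as a polynomial function on `ℂ`. -/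
def Yfun (m n r : ℕ) (z : ℂ) : ℂ :=
  ∑ k ∈ Finset.range (r + 1), (Xcoef m n r k : ℂ) * z ^ (r - k)

/-- `X_{m,n,r}` as a function on `ℝ`. -/
def XfunR (m n r : ℕ) (z : ℝ) : ℝ :=
  ∑ k ∈ Finset.range (r + 1), (Xcoef m n r k : ℝ) * z ^ k

/-- `X_{m,n,r}` as a polynomial over `ℂ`. -/
def XpolyC (m n r : ℕ) : Polynomial ℂ :=
  ∑ k ∈ Finset.range (r + 1), Polynomial.C (Xcoef m n r k : ℂ) * Polynomial.X ^ k

/-- `D_{m,n,r}`: the least positive integer clearing the denominators of `X_{m,n,r}`. -/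
def Dden (m n r : ℕ) : ℕ :=
  sInf {D : ℕ | 0 < D ∧ ∀ k : ℕ, ∃ z : ℤ, (D : ℚ) * Xcoef m n r k = (z : ℚ)}

/-- The squarefree core of an integer `d`: the unique squarefree integer such that
`d/core d` is a square. -/
def intCore (d : ℤ) : ℤ :=
  d.sign * ∏ p ∈ d.natAbs.primeFactors, (p : ℤ) ^ (d.natAbs.factorization p % 2)

/-- The polynomial `X_{m,n,r}(1 - √d · z)` over `ℂ` (principal square root of `d`). -/
def Xshift (d : ℤ) (m n r : ℕ) : Polynomial ℂ :=
  ∑ k ∈ Finset.range (r + 1), Polynomial.C (Xcoef m n r k : ℂ) *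
    (1 - Polynomial.C ((d : ℂ) ^ (1/2 : ℂ)) * Polynomial.X) ^ k

/-- `N_{d,m,n,r}`: the largest positive integer `N` such that
`(D_{m,n,r}/N)·X_{m,n,r}(1-√d·z)` has all coefficients in `ℤ[√core d]`. -/
def Nden (d : ℤ) (m n r : ℕ) : ℕ :=
  sSup {N : ℕ | 0 < N ∧ ∀ k : ℕ, ∃ u v : ℤ,
    ((Dden m n r : ℂ) / (N : ℂ)) * (Xshift d m n r).coeff k
      = (u : ℂ) + (v : ℂ) * ((intCore d : ℂ) ^ (1/2 : ℂ))}

/-- `𝒩_{d,n} = ∏_{p | n} p^{min(v_p(d)/2, v_p(n)+1/(p-1))}`. -/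
def calN (d : ℤ) (n : ℕ) : ℝ :=
  ∏ p ∈ n.primeFactors,
    (p : ℝ) ^ (min ((d.natAbs.factorization p : ℝ) / 2)
      ((n.factorization p : ℝ) + 1 / ((p : ℝ) - 1)))

/-- `μ_n = ∏_{p | n} p^{1/(p-1)}`. -/
def muN (n : ℕ) : ℝ := ∏ p ∈ n.primeFactors, (p : ℝ) ^ (1 / ((p : ℝ) - 1))

/-- The Gamma-function factor appearing in the admissibility condition. -/
def gammaMax (m n r : ℕ) : ℝ :=
  max (max 1 (Real.Gamma (1 - (m : ℝ) / n) * r.factorial /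
      Real.Gamma ((r : ℝ) + 1 - (m : ℝ) / n)))
    ((n : ℝ) * Real.Gamma ((r : ℝ) + 1 + (m : ℝ) / n) /
      ((m : ℝ) * Real.Gamma ((m : ℝ) / n) * r.factorial))

/-- `(C, D)` is admissible for `(d, n)`. -/
def Admissible (d : ℤ) (n : ℕ) (C D : ℝ) : Prop :=
  ∀ m r : ℕ, 0 < m → 2 * m < n → Nat.Coprime m n →
    gammaMax m n r * (Dden m n r : ℝ) / (Nden d m n r : ℝ) < C * (D / calN d n) ^ r

/-- `K` is an imaginary quadratic field `ℚ(√-t)` viewed as a subfield of `ℂ`. -/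
def IsImagQuadratic (K : Subfield ℂ) : Prop :=
  ∃ t : ℕ, 0 < t ∧ Squarefree t ∧
    K = Subfield.closure {Complex.I * (Real.sqrt t : ℂ)}

/-- Pochhammer symbol `(x)_k = x(x+1)⋯(x+k-1)` over `ℂ`. -/
def poch (x : ℂ) (k : ℕ) : ℂ := ∏ j ∈ Finset.range k, (x + j)

/-- The remainder function `R_{m,n,r}(z)`. -/
def Rfun (m n r : ℕ) (z : ℂ) : ℂ :=
  ((∏ j ∈ Finset.range (r + 1), ((j : ℂ) + (m : ℂ) / n)) /
      ∏ j ∈ Finset.range (r + 1), ((r : ℂ) + 1 + j)) *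
    ∑' k : ℕ, poch ((r : ℂ) + 1 - (m : ℂ) / n) k * poch ((r : ℂ) + 1) k /
      (poch (2 * (r : ℂ) + 2) k * (k.factorial : ℂ)) * (1 - z) ^ k


private lemma xsq (t : ℕ) :
    (Complex.I * (Real.sqrt t : ℂ)) * (Complex.I * (Real.sqrt t : ℂ)) = -(t : ℂ) := by
  have h : (Real.sqrt t : ℂ) * (Real.sqrt t : ℂ) = (t : ℂ) := by
    rw [← Complex.ofReal_mul, Real.mul_self_sqrt (by positivity)]
    simp
  calc Complex.I * (Real.sqrt t : ℂ) * (Complex.I * (Real.sqrt t : ℂ))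
      = (Complex.I * Complex.I) * ((Real.sqrt t : ℂ) * (Real.sqrt t : ℂ)) := by ring
    _ = -(t : ℂ) := by rw [Complex.I_mul_I, h]; ring

private lemma quad_mul (t : ℕ) (a b a' b' : ℚ) :
    ((a : ℂ) + (b : ℂ) * (Complex.I * (Real.sqrt t : ℂ)))
      * ((a' : ℂ) + (b' : ℂ) * (Complex.I * (Real.sqrt t : ℂ)))
    = ((a * a' - t * (b * b') : ℚ) : ℂ)
      + ((a * b' + a' * b : ℚ) : ℂ) * (Complex.I * (Real.sqrt t : ℂ)) := by
  push_cast
  linear_combination (b : ℂ) * (b' : ℂ) * xsq t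

private lemma quad_N_pos (t : ℕ) (ht : 0 < t) (a b : ℚ) (hab : ¬ (a = 0 ∧ b = 0)) :
    (0:ℚ) < a ^ 2 + t * b ^ 2 := by
  have ht' : (0:ℚ) < (t:ℚ) := by exact_mod_cast ht
  rcases not_and_or.mp hab with h | h
  · have : (0:ℚ) < a ^ 2 := by positivity
    nlinarith [sq_nonneg b]
  · have : (0:ℚ) < b ^ 2 := by positivity
    nlinarith [sq_nonneg a]

private lemma quad_inv (t : ℕ) (ht : 0 < t) (a b : ℚ)
    (h0 : (a : ℂ) + (b : ℂ) * (Complex.I * (Real.sqrt t : ℂ)) ≠ 0) :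
    ((a : ℂ) + (b : ℂ) * (Complex.I * (Real.sqrt t : ℂ)))⁻¹
      = ((a / (a ^ 2 + t * b ^ 2) : ℚ) : ℂ)
        + ((-b / (a ^ 2 + t * b ^ 2) : ℚ) : ℂ) * (Complex.I * (Real.sqrt t : ℂ)) := by
  have hab : ¬ (a = 0 ∧ b = 0) := by rintro ⟨rfl, rfl⟩; simp at h0
  have hN := quad_N_pos t ht a b hab
  have hNC : ((a ^ 2 + t * b ^ 2 : ℚ) : ℂ) ≠ 0 := by exact_mod_cast hN.ne'
  rw [inv_eq_of_mul_eq_one_right]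
  have e : (((a / (a ^ 2 + t * b ^ 2) : ℚ) : ℂ) + ((-b / (a ^ 2 + t * b ^ 2) : ℚ) : ℂ) * (Complex.I * (Real.sqrt t : ℂ))) = ((a:ℂ) + -(b:ℂ) * (Complex.I * (Real.sqrt t : ℂ))) / ((a ^ 2 + t * b ^ 2 : ℚ) : ℂ) := by
    push_cast; ring
  rw [e, mul_div_assoc', div_eq_one_iff_eq hNC]
  push_cast
  linear_combination -(b : ℂ)^2 * xsq t

private noncomputable def quadSF (t : ℕ) (ht : 0 < t) : Subfield ℂ where
  carrier := {z | ∃ a b : ℚ, z = (a : ℂ) + (b : ℂ) * (Complex.I * (Real.sqrt t : ℂ))}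
  zero_mem' := ⟨0, 0, by simp⟩
  one_mem' := ⟨1, 0, by simp⟩
  add_mem' := by
    rintro u v ⟨a, b, rfl⟩ ⟨a', b', rfl⟩
    exact ⟨a + a', b + b', by push_cast; ring⟩
  neg_mem' := by
    rintro u ⟨a, b, rfl⟩
    exact ⟨-a, -b, by push_cast; ring⟩
  mul_mem' := by
    rintro u v ⟨a, b, rfl⟩ ⟨a', b', rfl⟩
    exact ⟨a * a' - t * (b * b'), a * b' + a' * b, quad_mul t a b a' b'⟩
  inv_mem' := by
    rintro u ⟨a, b, rfl⟩
    by_cases h0 : (a : ℂ) + (b : ℂ) * (Complex.I * (Real.sqrt t : ℂ)) = 0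
    · rw [h0, inv_zero]; exact ⟨0, 0, by simp⟩
    · exact ⟨a / (a ^ 2 + t * b ^ 2), -b / (a ^ 2 + t * b ^ 2), quad_inv t ht a b h0⟩

private lemma mem_quad (t : ℕ) (ht : 0 < t) (z : ℂ)
    (hz : z ∈ Subfield.closure {Complex.I * (Real.sqrt t : ℂ)}) :
    ∃ a b : ℚ, z = (a : ℂ) + (b : ℂ) * (Complex.I * (Real.sqrt t : ℂ)) := by
  have hxS : Complex.I * (Real.sqrt t : ℂ) ∈ quadSF t ht := ⟨0, 1, by simp⟩
  have hle : Subfield.closure {Complex.I * (Real.sqrt t : ℂ)} ≤ quadSF t ht :=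
    Subfield.closure_le.mpr (by simpa using hxS)
  exact hle hz

private lemma one_le_abs_int (K : Subfield ℂ) (hK : ∃ t : ℕ, 0 < t ∧ Squarefree t ∧
      K = Subfield.closure {Complex.I * (Real.sqrt t : ℂ)})
    (z : ℂ) (hzK : z ∈ K) (hzI : IsIntegral ℤ z) (hz0 : z ≠ 0) :
    1 ≤ ‖z‖ := by
  obtain ⟨t, ht, -, rfl⟩ := hK
  obtain ⟨a, b, rfl⟩ := mem_quad t ht z hzK
  set x : ℂ := Complex.I * (Real.sqrt t : ℂ) with hxdef
  have hx2 : x * x = -(t : ℂ) := xsq t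
  have hconj : (starRingEnd ℂ) ((a : ℂ) + (b : ℂ) * x) = (a : ℂ) - (b : ℂ) * x := by
    simp [hxdef, map_add, map_mul, Complex.conj_I, Complex.conj_ofReal]
    ring
  have hci : IsIntegral ℤ ((starRingEnd ℂ) ((a : ℂ) + (b : ℂ) * x)) :=
    hzI.map (RingHom.toIntAlgHom (starRingEnd ℂ))
  have hprod : IsIntegral ℤ (((a : ℂ) + (b : ℂ) * x) * ((a : ℂ) - (b : ℂ) * x)) := by
    rw [← hconj]; exact hzI.mul hci
  have hid : ((a : ℂ) + (b : ℂ) * x) * ((a : ℂ) - (b : ℂ) * x)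
      = ((a ^ 2 + t * b ^ 2 : ℚ) : ℂ) := by
    push_cast
    linear_combination -(b : ℂ) ^ 2 * hx2
  rw [hid] at hprod
  have hratint : IsIntegral ℤ (a ^ 2 + t * b ^ 2 : ℚ) := by
    have heq : ((a ^ 2 + t * b ^ 2 : ℚ) : ℂ) = algebraMap ℚ ℂ (a ^ 2 + t * b ^ 2) := rfl
    rw [heq, isIntegral_algebraMap_iff (algebraMap ℚ ℂ).injective] at hprod
    exact hprod
  obtain ⟨n, hn⟩ := IsIntegrallyClosed.isIntegral_iff.mp hratint
  have hab : ¬ (a = 0 ∧ b = 0) := by rintro ⟨rfl, rfl⟩; simp at hz0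
  have hNpos : (0:ℚ) < a ^ 2 + t * b ^ 2 := quad_N_pos t ht a b hab
  have hn1 : (1:ℚ) ≤ a ^ 2 + t * b ^ 2 := by
    have hn' : (n : ℚ) = a ^ 2 + t * b ^ 2 := by exact_mod_cast hn
    have h0n : (0:ℚ) < (n:ℚ) := hn' ▸ hNpos
    have h0n' : 0 < n := by exact_mod_cast h0n
    have : (1:ℚ) ≤ (n:ℚ) := by exact_mod_cast h0n'
    linarith [hn' ▸ this]
  have hnsq : Complex.normSq ((a : ℂ) + (b : ℂ) * x) = ((a ^ 2 + t * b ^ 2 : ℚ) : ℝ) := by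
    have hmc := Complex.mul_conj ((a : ℂ) + (b : ℂ) * x)
    rw [hconj, hid] at hmc
    exact_mod_cast hmc.symm
  have h1R : (1:ℝ) ≤ ((a ^ 2 + t * b ^ 2 : ℚ) : ℝ) := by exact_mod_cast hn1
  have habs := Complex.sq_norm ((a : ℂ) + (b : ℂ) * x)
  nlinarith [norm_nonneg ((a : ℂ) + (b : ℂ) * x)]

set_option maxHeartbeats 1000000 in
theorem stmt_2 (θ : ℂ) (K : Subfield ℂ) (hK : IsImagQuadratic K)
    (k₀ ℓ₀ E Q : ℝ) (hk₀ : 0 < k₀) (hℓ₀ : 0 < ℓ₀) (hE : 1 < E) (hQ : 1 < Q)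
    (hℓE : 1 ≤ 2 * ℓ₀ * E)
    (p q : ℕ → ℂ)
    (hpK : ∀ r, p r ∈ K) (hqK : ∀ r, q r ∈ K)
    (hpI : ∀ r, IsIntegral ℤ (p r)) (hqI : ∀ r, IsIntegral ℤ (q r))
    (hW : ∀ r, p r * q (r + 1) ≠ p (r + 1) * q r)
    (hqbd : ∀ r, ‖q r‖ < k₀ * Q ^ r)
    (happ : ∀ r, ‖q r * θ - p r‖ ≤ ℓ₀ / E ^ r)
    (κ c : ℝ) (hκ : κ = Real.log Q / Real.log E)
    (hc : c = 2 * k₀ * (2 * ℓ₀ * E) ^ κ) :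
    ∀ P Q' : ℂ, P ∈ K → Q' ∈ K → IsIntegral ℤ P → IsIntegral ℤ Q' → Q' ≠ 0 →
      (∀ r : ℕ, P * q r ≠ p r * Q') →
      1 / (c * ‖Q'‖ ^ (κ + 1)) < ‖θ - P / Q'‖ := by
  intro P Q' hPK hQK hPI hQI hQ0 hne
  obtain ⟨t, ht, hsf, hKeq⟩ := hK
  have hKrep : ∃ t : ℕ, 0 < t ∧ Squarefree t ∧
      K = Subfield.closure {Complex.I * (Real.sqrt t : ℂ)} := ⟨t, ht, hsf, hKeq⟩
  have hE0 : (0:ℝ) < E := by linarith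
  have hQ0' : (0:ℝ) < Q := by linarith
  set A : ℝ := ‖Q'‖ with hAdef
  have hA1 : 1 ≤ A := by
    rw [hKeq] at hQK
    exact one_le_abs_int K hKrep Q' (hKeq ▸ hQK) hQI hQ0
  have hA0 : 0 < A := by linarith
  have hκpos : 0 < κ := by
    rw [hκ]
    exact div_pos (Real.log_pos hQ) (Real.log_pos hE)
  -- choose minimal r with 2ℓ₀A ≤ E^r
  have hex : ∃ n : ℕ, 2 * ℓ₀ * A ≤ E ^ n := by
    obtain ⟨n, hn⟩ := pow_unbounded_of_one_lt (2 * ℓ₀ * A) hE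
    exact ⟨n, hn.le⟩
  set r : ℕ := Nat.find hex with hrdef
  have h1 : 2 * ℓ₀ * A ≤ E ^ r := Nat.find_spec hex
  have h2 : E ^ r ≤ 2 * ℓ₀ * E * A := by
    by_cases hr0 : r = 0
    · rw [hr0, pow_zero]
      nlinarith
    · have hrm : E ^ (r - 1) < 2 * ℓ₀ * A := by
        have h' := Nat.find_min hex (show r - 1 < r from by omega)
        push_neg at h'
        exact h'
      have hEr : E ^ r = E * E ^ (r - 1) := by
        rw [← pow_succ']
        congr 1
        omega
      rw [hEr]
      nlinarith
  have hEr0 : (0:ℝ) < E ^ r := pow_pos hE0 r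
  -- the nonzero algebraic integer
  set w : ℂ := P * q r - p r * Q' with hwdef
  have hw0 : w ≠ 0 := sub_ne_zero.mpr (hne r)
  have hwK : w ∈ K := K.sub_mem (K.mul_mem hPK (hqK r)) (K.mul_mem (hpK r) hQK)
  have hwI : IsIntegral ℤ w := (hPI.mul (hqI r)).sub ((hpI r).mul hQI)
  have hw1 : 1 ≤ ‖w‖ := one_le_abs_int K hKrep w hwK hwI hw0
  set δ : ℝ := ‖θ - P / Q'‖ with hδdef
  have hδ0 : 0 ≤ δ := norm_nonneg _
  -- key identity
  have hid : w = q r * (P - θ * Q') + Q' * (q r * θ - p r) := by rw [hwdef]; ring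
  have habs1 : ‖P - θ * Q'‖ = A * δ := by
    have : P - θ * Q' = -(Q' * (θ - P / Q')) := by
      field_simp
      ring
    rw [this, norm_neg, norm_mul]
  have htr : ‖w‖ ≤ ‖q r‖ * (A * δ) + A * (ℓ₀ / E ^ r) := by
    rw [hid]
    calc ‖q r * (P - θ * Q') + Q' * (q r * θ - p r)‖
        ≤ ‖q r * (P - θ * Q')‖ + ‖Q' * (q r * θ - p r)‖ :=
          norm_add_le _ _
      _ = ‖q r‖ * (A * δ) + A * ‖q r * θ - p r‖ := by
          rw [norm_mul, norm_mul, habs1]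
      _ ≤ ‖q r‖ * (A * δ) + A * (ℓ₀ / E ^ r) := by
          have := happ r
          nlinarith
  have hhalf : A * (ℓ₀ / E ^ r) ≤ 1 / 2 := by
    rw [mul_div_assoc', div_le_div_iff₀ hEr0 (by norm_num)]
    nlinarith
  have h3 : 1 / 2 ≤ ‖q r‖ * (A * δ) := by linarith
  have hAδ : 0 < A * δ := by
    by_contra hcon
    push_neg at hcon
    nlinarith [norm_nonneg (q r), mul_nonpos_of_nonneg_of_nonpos
      (norm_nonneg (q r)) hcon]
  have hδpos : 0 < δ := by nlinarith
  have h4 : 1 / 2 < k₀ * Q ^ r * (A * δ) :=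
    lt_of_le_of_lt h3 (mul_lt_mul_of_pos_right (hqbd r) hAδ)
  -- Q ^ r = (E ^ r) ^ κ
  have hEκ : E ^ κ = Q := by
    rw [hκ, Real.rpow_def_of_pos hE0, mul_comm,
      div_mul_cancel₀ _ (Real.log_pos hE).ne', Real.exp_log hQ0']
  have hQrE : Q ^ r = (E ^ r) ^ κ := by
    rw [← hEκ, ← Real.rpow_natCast (E ^ κ) r, ← Real.rpow_natCast E r,
      ← Real.rpow_mul hE0.le, ← Real.rpow_mul hE0.le, mul_comm]
  have hQr : Q ^ r ≤ (2 * ℓ₀ * E) ^ κ * A ^ κ := by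
    rw [hQrE, ← Real.mul_rpow (by positivity) hA0.le]
    exact Real.rpow_le_rpow hEr0.le h2 hκpos.le
  have hAκ1 : A ^ (κ + 1) = A ^ κ * A := Real.rpow_add_one hA0.ne' κ
  have hcB : k₀ * Q ^ r * A ≤ c / 2 * A ^ (κ + 1) := by
    rw [hc, hAκ1]
    have step1 : k₀ * Q ^ r ≤ k₀ * ((2 * ℓ₀ * E) ^ κ * A ^ κ) :=
      mul_le_mul_of_nonneg_left hQr hk₀.le
    have step2 := mul_le_mul_of_nonneg_right step1 hA0.le
    calc k₀ * Q ^ r * A ≤ k₀ * ((2 * ℓ₀ * E) ^ κ * A ^ κ) * A := step2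
      _ = 2 * k₀ * (2 * ℓ₀ * E) ^ κ / 2 * (A ^ κ * A) := by ring
  have hcpos : 0 < c := by
    rw [hc]
    positivity
  have hBpos : 0 < A ^ (κ + 1) := Real.rpow_pos_of_pos hA0 _
  rw [div_lt_iff₀ (by positivity)]
  nlinarith [mul_le_mul_of_nonneg_right hcB hδ0]
end
end

section
/- Let θ ∈ ℂ and let K be an imaginary quadratic field regarded as a subfield of ℂ with ring of integers 𝓞_K. Suppose k₀, ℓ₀ > 0 and E, Q > 1 are real numbers with 2ℓ₀E ≥ 1, and that for each integer r ≥ 0 there are p_r, q_r ∈ 𝓞_K satisfying p_r·q_{r+1} ≠ p_{r+1}·q_r, |q_r| < k₀·Q^r and |q_r·θ − p_r| ≤ ℓ₀·E^{−r}. Put κ = log Q / log E and c = 2k₀·Q·(2ℓ₀E)^κ. Then for all p, q ∈ 𝓞_K with q ≠ 0, we have |θ − p/q| > 1/(c·|q|^{κ+1}). -/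
open Finset MeasureTheory

noncomputable section

def quadSub (t : ℕ) (ht : 0 < t) : Subfield ℂ where
  carrier := {z | ∃ a b : ℚ, z = (a : ℂ) + (b : ℂ) * (Complex.I * (Real.sqrt t : ℂ))}
  zero_mem' := ⟨0, 0, by simp⟩
  one_mem' := ⟨1, 0, by simp⟩
  add_mem' := by
    rintro x y ⟨a, b, rfl⟩ ⟨c, d, rfl⟩
    exact ⟨a + c, b + d, by push_cast; ring⟩
  neg_mem' := by
    rintro x ⟨a, b, rfl⟩
    exact ⟨-a, -b, by push_cast; ring⟩
  mul_mem' := by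
    rintro x y ⟨a, b, rfl⟩ ⟨c, d, rfl⟩
    have hw : (Complex.I * (Real.sqrt t : ℂ)) * (Complex.I * (Real.sqrt t : ℂ)) = -(t : ℂ) := by
      have h1 : ((Real.sqrt t : ℝ) : ℂ) * ((Real.sqrt t : ℝ) : ℂ) = (t : ℂ) := by
        rw [← Complex.ofReal_mul, Real.mul_self_sqrt (by positivity)]
        push_cast; ring
      calc Complex.I * (Real.sqrt t : ℂ) * (Complex.I * (Real.sqrt t : ℂ))
          = Complex.I ^ 2 * ((Real.sqrt t : ℂ) * (Real.sqrt t : ℂ)) := by ring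
        _ = -(t : ℂ) := by rw [Complex.I_sq, h1]; ring
    exact ⟨a * c - b * d * t, a * d + b * c, by push_cast; linear_combination (b : ℂ) * d * hw⟩
  inv_mem' := by
    rintro x ⟨a, b, rfl⟩
    by_cases hx : (a : ℂ) + (b : ℂ) * (Complex.I * (Real.sqrt t : ℂ)) = 0
    · exact ⟨0, 0, by simp [hx]⟩
    have hw : (Complex.I * (Real.sqrt t : ℂ)) * (Complex.I * (Real.sqrt t : ℂ)) = -(t : ℂ) := by
      have h1 : ((Real.sqrt t : ℝ) : ℂ) * ((Real.sqrt t : ℝ) : ℂ) = (t : ℂ) := by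
        rw [← Complex.ofReal_mul, Real.mul_self_sqrt (by positivity)]
        push_cast; ring
      calc Complex.I * (Real.sqrt t : ℂ) * (Complex.I * (Real.sqrt t : ℂ))
          = Complex.I ^ 2 * ((Real.sqrt t : ℂ) * (Real.sqrt t : ℂ)) := by ring
        _ = -(t : ℂ) := by rw [Complex.I_sq, h1]; ring
    have hd : a ^ 2 + t * b ^ 2 ≠ 0 := by
      intro h
      have ht' : (1 : ℚ) ≤ t := by exact_mod_cast ht
      have ha : a = 0 := by nlinarith [sq_nonneg a, sq_nonneg b]
      have hb : b = 0 := by nlinarith [sq_nonneg a, sq_nonneg b]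
      exact hx (by rw [ha, hb]; simp)
    refine ⟨a / (a ^ 2 + t * b ^ 2), -b / (a ^ 2 + t * b ^ 2), ?_⟩
    apply inv_eq_of_mul_eq_one_right
    have hdC : ((a : ℂ) ^ 2 + (t : ℂ) * (b : ℂ) ^ 2) ≠ 0 := by
      intro h
      apply hd
      have : (((a ^ 2 + t * b ^ 2 : ℚ)) : ℂ) = 0 := by push_cast; linear_combination h
      exact_mod_cast this
    push_cast
    rw [div_eq_mul_inv, div_eq_mul_inv]
    linear_combination (-(b:ℂ)^2 * ((a : ℂ) ^ 2 + (t : ℂ) * (b : ℂ) ^ 2)⁻¹) * hw + mul_inv_cancel₀ hdC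


lemma one_le_abs_of_mem {K : Subfield ℂ} (hK : IsImagQuadratic K) {x : ℂ}
    (hx : x ∈ K) (hi : IsIntegral ℤ x) (h0 : x ≠ 0) : 1 ≤ ‖x‖ := by
  obtain ⟨t, ht, -, rfl⟩ := hK
  have hle : Subfield.closure {Complex.I * (Real.sqrt t : ℂ)} ≤ quadSub t ht :=
    Subfield.closure_le.mpr (by
      rintro z hz
      rw [Set.mem_singleton_iff] at hz
      exact ⟨0, 1, by rw [hz]; push_cast; ring⟩)
  obtain ⟨a, b, hab⟩ := hle hx
  have hw : (Complex.I * (Real.sqrt t : ℂ)) * (Complex.I * (Real.sqrt t : ℂ)) = -(t : ℂ) := by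
    have h1 : ((Real.sqrt t : ℝ) : ℂ) * ((Real.sqrt t : ℝ) : ℂ) = (t : ℂ) := by
      rw [← Complex.ofReal_mul, Real.mul_self_sqrt (by positivity)]
      push_cast; ring
    calc Complex.I * (Real.sqrt t : ℂ) * (Complex.I * (Real.sqrt t : ℂ))
        = Complex.I ^ 2 * ((Real.sqrt t : ℂ) * (Real.sqrt t : ℂ)) := by ring
      _ = -(t : ℂ) := by rw [Complex.I_sq, h1]; ring
  -- conjugate
  have hconj : (starRingEnd ℂ) x = (a : ℂ) - (b : ℂ) * (Complex.I * (Real.sqrt t : ℂ)) := by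
    rw [hab]
    simp [map_add, map_mul, Complex.conj_I]
    ring
  have hconjI : IsIntegral ℤ ((starRingEnd ℂ) x) :=
    IsIntegral.map ((starRingEnd ℂ).toIntAlgHom) hi
  have hprodI : IsIntegral ℤ (x * (starRingEnd ℂ) x) := hi.mul hconjI
  have hval : x * (starRingEnd ℂ) x = ((a ^ 2 + t * b ^ 2 : ℚ) : ℂ) := by
    rw [hconj, hab]; push_cast; linear_combination (-(b:ℂ)^2) * hw
  rw [hval] at hprodI
  have hvalq : IsIntegral ℤ (a ^ 2 + t * b ^ 2 : ℚ) := by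
    have : ((a ^ 2 + t * b ^ 2 : ℚ) : ℂ) = algebraMap ℚ ℂ (a ^ 2 + t * b ^ 2) := by
      exact (map_ratCast (algebraMap ℚ ℂ) _).symm
    rw [this] at hprodI
    exact (isIntegral_algebraMap_iff (algebraMap ℚ ℂ).injective).mp hprodI
  obtain ⟨n, hn⟩ := IsIntegrallyClosed.isIntegral_iff.mp hvalq
  have hnq : ((n : ℚ) : ℚ) = a ^ 2 + t * b ^ 2 := by exact_mod_cast hn
  have hns : (Complex.normSq x : ℂ) = ((a ^ 2 + t * b ^ 2 : ℚ) : ℂ) := by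
    rw [← Complex.mul_conj, hval]
  have hnsr : (Complex.normSq x : ℝ) = ((a ^ 2 + t * b ^ 2 : ℚ) : ℝ) := by
    exact_mod_cast hns
  have hpos : 0 < Complex.normSq x := Complex.normSq_pos.mpr h0
  have hn1 : 1 ≤ (n : ℝ) := by
    have : (0 : ℝ) < (n : ℝ) := by
      rw [show ((n : ℤ) : ℝ) = ((a ^ 2 + t * b ^ 2 : ℚ) : ℝ) by exact_mod_cast hnq, ← hnsr]
      exact hpos
    exact_mod_cast (by exact_mod_cast this : (0 : ℤ) < n)
  have h1ns : 1 ≤ Complex.normSq x := by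
    rw [hnsr, ← show ((n : ℤ) : ℝ) = ((a ^ 2 + t * b ^ 2 : ℚ) : ℝ) by exact_mod_cast hnq]
    exact hn1
  have := Complex.sq_norm x
  nlinarith [norm_nonneg x]


theorem stmt_3 (θ : ℂ) (K : Subfield ℂ) (hK : IsImagQuadratic K)
    (k₀ ℓ₀ E Q : ℝ) (hk₀ : 0 < k₀) (hℓ₀ : 0 < ℓ₀) (hE : 1 < E) (hQ : 1 < Q)
    (hℓE : 1 ≤ 2 * ℓ₀ * E)
    (p q : ℕ → ℂ)
    (hpK : ∀ r, p r ∈ K) (hqK : ∀ r, q r ∈ K)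
    (hpI : ∀ r, IsIntegral ℤ (p r)) (hqI : ∀ r, IsIntegral ℤ (q r))
    (hW : ∀ r, p r * q (r + 1) ≠ p (r + 1) * q r)
    (hqbd : ∀ r, ‖q r‖ < k₀ * Q ^ r)
    (happ : ∀ r, ‖q r * θ - p r‖ ≤ ℓ₀ / E ^ r)
    (κ c : ℝ) (hκ : κ = Real.log Q / Real.log E)
    (hc : c = 2 * k₀ * Q * (2 * ℓ₀ * E) ^ κ) :
    ∀ P Q' : ℂ, P ∈ K → Q' ∈ K → IsIntegral ℤ P → IsIntegral ℤ Q' → Q' ≠ 0 →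
      1 / (c * ‖Q'‖ ^ (κ + 1)) < ‖θ - P / Q'‖ := by
  intro P Q' hPK hQK hPI hQI hQ0
  have hEpos : (0 : ℝ) < E := by linarith
  have hQpos : (0 : ℝ) < Q := by linarith
  have hκpos : 0 < κ := by
    rw [hκ]; exact div_pos (Real.log_pos hQ) (Real.log_pos hE)
  set N := ‖Q'‖ with hN
  have hN1 : 1 ≤ N := one_le_abs_of_mem hK hQK hQI hQ0
  have hNpos : 0 < N := by linarith
  -- choose r
  have hex : ∃ r : ℕ, 2 * ℓ₀ * N ≤ E ^ r := by
    obtain ⟨n, hn⟩ := pow_unbounded_of_one_lt (2 * ℓ₀ * N) hE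
    exact ⟨n, le_of_lt hn⟩
  obtain ⟨r, hr, hrup⟩ : ∃ r : ℕ, 2 * ℓ₀ * N ≤ E ^ r ∧ E ^ r ≤ 2 * ℓ₀ * E * N := by
    refine ⟨Nat.find hex, Nat.find_spec hex, ?_⟩
    rcases Nat.eq_zero_or_pos (Nat.find hex) with h0 | hpos
    · rw [h0]; simp; nlinarith
    · have hmin := Nat.find_min hex (Nat.sub_lt hpos one_pos)
      push_neg at hmin
      have hEr : E ^ Nat.find hex = E ^ (Nat.find hex - 1) * E := by
        rw [← pow_succ, Nat.sub_add_cancel hpos]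
      rw [hEr]
      nlinarith
  -- choose s
  obtain ⟨s, hs, hx0⟩ : ∃ s, (s = r ∨ s = r + 1) ∧ q s * P - p s * Q' ≠ 0 := by
    by_contra h
    push_neg at h
    have h1 : q r * P = p r * Q' := sub_eq_zero.mp (h r (Or.inl rfl))
    have h2 : q (r + 1) * P = p (r + 1) * Q' := sub_eq_zero.mp (h (r + 1) (Or.inr rfl))
    by_cases hP : P = 0
    · subst hP
      have hpr : p r = 0 := by
        have h1' : p r * Q' = 0 := by rw [← h1]; ring
        rcases mul_eq_zero.mp h1' with h' | h'
        · exact h'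
        · exact absurd h' hQ0
      have hpr1 : p (r + 1) = 0 := by
        have h2' : p (r + 1) * Q' = 0 := by rw [← h2]; ring
        rcases mul_eq_zero.mp h2' with h' | h'
        · exact h'
        · exact absurd h' hQ0
      exact hW r (by rw [hpr, hpr1]; ring)
    · apply hW r
      have key : (p r * q (r + 1)) * (P * Q') = (p (r + 1) * q r) * (P * Q') := by
        have e1 : q r * P - p r * Q' = 0 := sub_eq_zero.mpr h1
        have e2 : q (r + 1) * P - p (r + 1) * Q' = 0 := sub_eq_zero.mpr h2
        linear_combination (-(p (r + 1)) * Q') * e1 + (p r * Q') * e2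
      exact mul_right_cancel₀ (mul_ne_zero hP hQ0) key
  -- the nonvanishing integral element
  set x := q s * P - p s * Q' with hxdef
  have hxK : x ∈ K := K.sub_mem (K.mul_mem (hqK s) hPK) (K.mul_mem (hpK s) hQK)
  have hxI : IsIntegral ℤ x := ((hqI s).mul hPI).sub ((hpI s).mul hQI)
  have h1x : 1 ≤ ‖x‖ := one_le_abs_of_mem hK hxK hxI hx0
  have hsr : r ≤ s := by rcases hs with h' | h' <;> omega
  -- tail bound
  have htail : ‖q s * θ - p s‖ * N ≤ 1 / 2 := by
    have h1 : ‖q s * θ - p s‖ ≤ ℓ₀ / E ^ s := happ s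
    have h2 : E ^ r ≤ E ^ s := pow_le_pow_right₀ (le_of_lt hE) hsr
    have h3 : ℓ₀ / E ^ s ≤ ℓ₀ / E ^ r := by
      apply div_le_div_of_nonneg_left (le_of_lt hℓ₀) (by positivity) h2
    have h4 : ℓ₀ / E ^ r ≤ 1 / (2 * N) := by
      rw [div_le_div_iff₀ (by positivity) (by positivity)]
      nlinarith
    calc ‖q s * θ - p s‖ * N ≤ (1 / (2 * N)) * N := by
          apply mul_le_mul_of_nonneg_right _ (le_of_lt hNpos)
          exact le_trans h1 (le_trans h3 h4)
      _ = 1 / 2 := by field_simp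
  -- splitting
  set D := ‖θ - P / Q'‖ with hD
  have hsplit : ‖x‖ ≤ ‖q s‖ * (N * D) + ‖q s * θ - p s‖ * N := by
    have hxe : x = -(q s * (Q' * (θ - P / Q'))) + (q s * θ - p s) * Q' := by
      rw [hxdef]
      field_simp
      ring
    calc ‖x‖ ≤ ‖(-(q s * (Q' * (θ - P / Q'))))‖
          + ‖((q s * θ - p s) * Q')‖ := by rw [hxe]; exact norm_add_le _ _
      _ = ‖q s‖ * (N * D) + ‖q s * θ - p s‖ * N := by
          rw [norm_neg, norm_mul, norm_mul, norm_mul]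
  have hhalf : 1 / 2 ≤ ‖q s‖ * (N * D) := by
    have := le_trans h1x hsplit
    linarith
  -- bound on |q s|
  have hEκ : E ^ κ = Q := by
    rw [hκ, Real.rpow_def_of_pos hEpos]
    rw [show Real.log E * (Real.log Q / Real.log E) = Real.log Q by
      have hlE : Real.log E ≠ 0 := ne_of_gt (Real.log_pos hE)
      field_simp]
    exact Real.exp_log hQpos
  have hQr : Q ^ r = (E ^ r) ^ κ := by
    rw [← Real.rpow_natCast E r, ← Real.rpow_mul (le_of_lt hEpos), mul_comm,
      Real.rpow_mul (le_of_lt hEpos), hEκ, Real.rpow_natCast]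
  have hQrle : Q ^ r ≤ (2 * ℓ₀ * E) ^ κ * N ^ κ := by
    rw [hQr, ← Real.mul_rpow (by positivity) (le_of_lt hNpos)]
    exact Real.rpow_le_rpow (by positivity) hrup (le_of_lt hκpos)
  have hqs : ‖q s‖ < (c / 2) * N ^ κ := by
    have h1 : ‖q s‖ < k₀ * Q ^ s := hqbd s
    have h2 : Q ^ s ≤ Q * Q ^ r := by
      rcases hs with h' | h'
      · rw [h']; nlinarith [pow_pos hQpos r]
      · rw [h', pow_succ]; ring_nf; rfl
    have h3 : k₀ * Q ^ s ≤ k₀ * (Q * ((2 * ℓ₀ * E) ^ κ * N ^ κ)) := by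
      apply mul_le_mul_of_nonneg_left _ (le_of_lt hk₀)
      refine le_trans h2 (mul_le_mul_of_nonneg_left hQrle (le_of_lt hQpos))
    calc ‖q s‖ < k₀ * Q ^ s := h1
      _ ≤ k₀ * (Q * ((2 * ℓ₀ * E) ^ κ * N ^ κ)) := h3
      _ = (c / 2) * N ^ κ := by rw [hc]; ring
  -- conclude
  have hNκpos : 0 < N ^ κ := Real.rpow_pos_of_pos hNpos κ
  have hcpos : 0 < c := by
    rw [hc]
    have : 0 < (2 * ℓ₀ * E) ^ κ := Real.rpow_pos_of_pos (by positivity) κ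
    positivity
  have hDpos : 0 < D := by
    by_contra h
    push_neg at h
    have hqn : 0 ≤ ‖q s‖ := norm_nonneg _
    have h5 : ‖q s‖ * (N * D) ≤ 0 := by nlinarith [mul_nonneg hqn hNpos.le]
    linarith
  have hNκ1 : N ^ (κ + 1) = N ^ κ * N := by
    rw [Real.rpow_add hNpos, Real.rpow_one]
  have hfinal : 1 < c * N ^ (κ + 1) * D := by
    have h1 : 2 * (‖q s‖ * (N * D)) < 2 * ((c / 2) * N ^ κ * (N * D)) := by
      apply mul_lt_mul_of_pos_left _ two_pos
      apply mul_lt_mul_of_pos_right hqs (by positivity)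
    calc (1 : ℝ) = 2 * (1 / 2) := by norm_num
      _ ≤ 2 * (‖q s‖ * (N * D)) := by linarith
      _ < 2 * ((c / 2) * N ^ κ * (N * D)) := h1
      _ = c * N ^ (κ + 1) * D := by rw [hNκ1]; ring
  rw [div_lt_iff₀ (by positivity)]
  calc (1 : ℝ) < c * N ^ (κ + 1) * D := hfinal
    _ = D * (c * N ^ (κ + 1)) := by ring
end
end

section
/- Let α, β be positive real numbers with 2β > α, and let w ∈ ℂ with Re(w) > 0. Then |∫₀^∞ t^{α−1}·(t+w)^{−β}·(t+w̄)^{−β} dt| ≥ ∫₀^∞ t^{α−1}·(t+|w|)^{−2β} dt, where w̄ is the complex conjugate of w and the complex powers are principal values. -/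
open Finset MeasureTheory

noncomputable section

lemma aux_integrable (α β c : ℝ) (hα : 0 < α) (hαβ : α < 2 * β) (hc : 0 < c) :
    MeasureTheory.IntegrableOn (fun t : ℝ => t ^ (α - 1) * (t + c) ^ (-(2 * β)))
      (Set.Ioi 0) := by
  have hcont : ContinuousOn (fun t : ℝ => (t + c) ^ (-(2 * β))) (Set.Ioi 0) := by
    apply ContinuousOn.rpow_const (by fun_prop)
    intro t ht
    exact Or.inl (by simp only [Set.mem_Ioi] at ht; positivity)
  have hloc : LocallyIntegrableOn (fun t : ℝ => (t + c) ^ (-(2 * β))) (Set.Ioi 0) :=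
    hcont.locallyIntegrableOn measurableSet_Ioi
  have htop : (fun t : ℝ => (t + c) ^ (-(2 * β))) =O[Filter.atTop]
      (fun t : ℝ => t ^ (-(2 * β))) := by
    apply Asymptotics.IsBigO.of_bound 1
    filter_upwards [Filter.eventually_gt_atTop (0 : ℝ)] with t ht
    have h1 : (0:ℝ) < t + c := by linarith
    rw [one_mul, Real.norm_of_nonneg (Real.rpow_nonneg h1.le _),
      Real.norm_of_nonneg (Real.rpow_nonneg ht.le _)]
    exact Real.rpow_le_rpow_of_nonpos ht (by linarith) (by linarith)
  have hbot : (fun t : ℝ => (t + c) ^ (-(2 * β))) =O[nhdsWithin 0 (Set.Ioi 0)]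
      (fun t : ℝ => t ^ (-(0:ℝ))) := by
    apply Asymptotics.IsBigO.of_bound (c ^ (-(2 * β)))
    filter_upwards [self_mem_nhdsWithin] with t ht
    simp only [Set.mem_Ioi] at ht
    have h1 : (0:ℝ) < t + c := by linarith
    rw [neg_zero, Real.rpow_zero, norm_one, mul_one,
      Real.norm_of_nonneg (Real.rpow_nonneg h1.le _)]
    exact Real.rpow_le_rpow_of_nonpos hc (by linarith) (by linarith)
  simpa using mellin_convergent_of_isBigO_scalar hloc htop hαβ hbot hα

theorem stmt_6 (α β : ℝ) (hα : 0 < α) (hβ : 0 < β) (hαβ : α < 2 * β)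
    (w : ℂ) (hw : 0 < w.re) :
    (∫ t in Set.Ioi (0 : ℝ), t ^ (α - 1) * (t + ‖w‖) ^ (-(2 * β))) ≤
      ‖(∫ t in Set.Ioi (0 : ℝ),
        ((t ^ (α - 1) : ℝ) : ℂ) * ((t : ℂ) + w) ^ (-(β : ℂ)) *
          ((t : ℂ) + (starRingEnd ℂ) w) ^ (-(β : ℂ)))‖ := by
  have hw0 : w ≠ 0 := fun h => by simp [h] at hw
  have hc0 : 0 < ‖w‖ := norm_pos_iff.mpr hw0
  set F : ℝ → ℝ := fun t => t ^ (α - 1) * (‖(t:ℂ) + w‖) ^ (-(2 * β)) with hF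
  have habspos : ∀ t : ℝ, 0 < t → 0 < ‖(t:ℂ) + w‖ := by
    intro t ht
    apply norm_pos_iff.mpr
    intro h
    have : ((t:ℂ) + w).re = 0 := by rw [h]; simp
    simp only [Complex.add_re, Complex.ofReal_re] at this
    linarith
  have hkey : Set.EqOn (fun t : ℝ =>
      ((t ^ (α - 1) : ℝ) : ℂ) * ((t:ℂ) + w) ^ (-(β:ℂ)) *
        ((t:ℂ) + (starRingEnd ℂ) w) ^ (-(β:ℂ)))
      (fun t : ℝ => ((F t : ℝ) : ℂ)) (Set.Ioi 0) := by
    intro t ht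
    simp only [Set.mem_Ioi] at ht
    have hzre : 0 < ((t:ℂ) + w).re := by
      simp only [Complex.add_re, Complex.ofReal_re]; linarith
    have hz0 : ((t:ℂ) + w) ≠ 0 := fun h => by simp [h] at hzre
    have harg : ((t:ℂ) + w).arg ≠ Real.pi := by
      intro h
      have := Complex.arg_eq_pi_iff.mp h
      linarith [this.1]
    have h1 : ((t:ℂ) + (starRingEnd ℂ) w) = (starRingEnd ℂ) ((t:ℂ) + w) := by
      simp [Complex.conj_ofReal]
    have h2 : (starRingEnd ℂ) (-(β:ℂ)) = -(β:ℂ) := by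
      simp [Complex.conj_ofReal]
    simp only
    rw [h1, Complex.conj_cpow _ _ harg, h2, mul_assoc, Complex.mul_conj,
      Complex.normSq_eq_norm_sq]
    have habs : ‖((t:ℂ) + w) ^ (-(β:ℂ))‖ =
        (‖(t:ℂ) + w‖) ^ (-β) := by
      rw [Complex.norm_cpow_of_ne_zero hz0]
      simp
    rw [habs]
    have h3 : ((‖(t:ℂ) + w‖) ^ (-β)) ^ 2 =
        (‖(t:ℂ) + w‖) ^ (-(2 * β)) := by
      rw [sq, ← Real.rpow_add (habspos t ht)]
      ring_nf
    rw [h3, hF]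
    push_cast
    ring
  rw [setIntegral_congr_fun measurableSet_Ioi hkey]
  have hcast : (∫ x in Set.Ioi (0:ℝ), ((F x : ℝ) : ℂ)) = ((∫ x in Set.Ioi (0:ℝ), F x : ℝ) : ℂ) :=
    integral_ofReal
  rw [hcast, Complex.norm_real, Real.norm_eq_abs]
  have hFnonneg : ∀ t ∈ Set.Ioi (0:ℝ), 0 ≤ F t := by
    intro t ht
    simp only [Set.mem_Ioi] at ht
    exact mul_nonneg (Real.rpow_nonneg ht.le _) (Real.rpow_nonneg (norm_nonneg _) _)
  rw [abs_of_nonneg (setIntegral_nonneg measurableSet_Ioi hFnonneg)]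
  -- integrability of F
  have hFmeas : AEStronglyMeasurable F (volume.restrict (Set.Ioi 0)) := by
    apply ContinuousOn.aestronglyMeasurable _ measurableSet_Ioi
    apply ContinuousOn.mul
    · intro t ht
      exact (Real.continuousAt_rpow_const t _ (Or.inl (ne_of_gt ht))).continuousWithinAt
    · apply ContinuousOn.rpow_const
      · exact (continuous_norm.comp (by continuity)).continuousOn
      · intro t ht
        exact Or.inl (ne_of_gt (habspos t ht))
  have hG := aux_integrable α β w.re hα hαβ hw
  have hFint : IntegrableOn F (Set.Ioi 0) := by
    apply hG.mono' hFmeas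
    filter_upwards [ae_restrict_mem measurableSet_Ioi] with t ht
    simp only [Set.mem_Ioi] at ht
    rw [Real.norm_of_nonneg (hFnonneg t ht)]
    apply mul_le_mul_of_nonneg_left _ (Real.rpow_nonneg ht.le _)
    apply Real.rpow_le_rpow_of_nonpos (by linarith) _ (by linarith)
    calc t + w.re = ((t:ℂ) + w).re := by simp
    _ ≤ ‖(t:ℂ) + w‖ := Complex.re_le_norm _
  apply setIntegral_mono_on (aux_integrable α β (‖w‖) hα hαβ hc0) hFint
    measurableSet_Ioi
  intro t ht
  simp only [Set.mem_Ioi] at ht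
  apply mul_le_mul_of_nonneg_left _ (Real.rpow_nonneg ht.le _)
  apply Real.rpow_le_rpow_of_nonpos (habspos t ht) _ (by linarith)
  calc ‖(t:ℂ) + w‖ ≤ ‖(t:ℂ)‖ + ‖w‖ := norm_add_le _ _
  _ = t + ‖w‖ := by rw [Complex.norm_real, Real.norm_eq_abs, abs_of_pos ht]
end
end

section
/- Let m, n, r be integers with 0 < m < n/2, gcd(m,n) = 1 and r ≥ 1. Then every complex root of the polynomial X_{m,n,r}(z) is a negative real number; that is, X_{m,n,r} has exactly r real zeros, all of which are negative. -/
open Finset MeasureTheory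

noncomputable section

namespace Stmt10Aux

noncomputable section

variable (r : ℕ) (s : ℝ)

def A (k : ℕ) : ℝ := ∏ i ∈ Finset.range k, ((r : ℝ) - s - i)

def B (l : ℕ) : ℝ := ∏ i ∈ Finset.range l, ((r : ℝ) + s - i)

def c (j k : ℕ) : ℝ := (-1 : ℝ) ^ j * (-1 : ℝ) ^ k * (j.choose k) * A r s k * B r s (j - k)

def h (j : ℕ) (w : ℝ) : ℝ :=
  ∑ k ∈ Finset.range (j + 1),
    c r s j k * w ^ ((r : ℝ) - s - k) * (1 - w) ^ ((r : ℝ) + s - j + k)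

lemma c_zero (j : ℕ) : c r s (j + 1) 0 = -(((r : ℝ) + s - j) * c r s j 0) := by
  simp only [c, Nat.choose_zero_right, Nat.sub_zero, A, Finset.prod_range_zero, B,
    Finset.prod_range_succ, pow_succ]
  push_cast
  ring

lemma c_big {j k : ℕ} (h : j < k) : c r s j k = 0 := by
  simp [c, Nat.choose_eq_zero_of_lt h]

lemma c_succ (j k : ℕ) :
    c r s (j + 1) (k + 1) =
      ((r : ℝ) - s - k) * c r s j k - ((r : ℝ) + s - j + (k + 1)) * c r s j (k + 1) := by
  rcases lt_trichotomy k j with hkj | rfl | hkj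
  · have hk1 : k + 1 ≤ j := hkj
    have e1 : j + 1 - (k + 1) = (j - (k + 1)) + 1 := by omega
    have e2 : j - k = (j - (k + 1)) + 1 := by omega
    have e3 : ((j - (k + 1) : ℕ) : ℝ) = (j : ℝ) - (k : ℝ) - 1 := by
      rw [Nat.cast_sub hk1]; push_cast; ring
    simp only [c, e1, e2, A, B, Finset.prod_range_succ, Nat.choose_succ_succ j k, e3, pow_succ]
    push_cast
    ring
  · have h0 : k - (k + 1) = 0 := by omega
    simp only [c, A, B, Finset.prod_range_succ, Nat.choose_self, Nat.sub_self, h0,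
      Nat.choose_succ_self, Finset.prod_range_zero, pow_succ]
    push_cast
    ring
  · rw [c_big r s hkj, c_big r s (by omega : j < k + 1), c_big r s (by omega : j + 1 < k + 1)]
    ring

lemma h_deriv_sum (j : ℕ) (w : ℝ) :
    h r s (j + 1) w =
      ∑ k ∈ Finset.range (j + 1),
        (c r s j k * (((r : ℝ) - s - k) * w ^ ((r : ℝ) - s - k - 1)) *
            (1 - w) ^ ((r : ℝ) + s - j + k) -
          c r s j k * w ^ ((r : ℝ) - s - k) *
            (((r : ℝ) + s - j + k) * (1 - w) ^ ((r : ℝ) + s - j + k - 1))) := by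
  have hG1 : ∀ k : ℕ,
      c r s (j+1) (k+1) * w ^ ((r : ℝ) - s - (k+1:ℕ)) * (1 - w) ^ ((r : ℝ) + s - (j+1:ℕ) + (k+1:ℕ))
        = c r s j k * (((r : ℝ) - s - k) * w ^ ((r : ℝ) - s - k - 1)) *
            (1 - w) ^ ((r : ℝ) + s - j + k)
          - c r s j (k+1) * (((r : ℝ) + s - j + (k+1)) * w ^ ((r : ℝ) - s - k - 1)) *
            (1 - w) ^ ((r : ℝ) + s - j + k) := by
    intro k
    rw [c_succ]
    rw [show ((r : ℝ) - s - (k+1:ℕ)) = (r : ℝ) - s - k - 1 by push_cast; ring]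
    rw [show ((r : ℝ) + s - (j+1:ℕ) + (k+1:ℕ)) = (r : ℝ) + s - j + k by push_cast; ring]
    ring
  have hsplit : h r s (j+1) w
      = (∑ k ∈ Finset.range (j+1),
          (c r s j k * (((r : ℝ) - s - k) * w ^ ((r : ℝ) - s - k - 1)) *
            (1 - w) ^ ((r : ℝ) + s - j + k)
          - c r s j (k+1) * (((r : ℝ) + s - j + (k+1)) * w ^ ((r : ℝ) - s - k - 1)) *
            (1 - w) ^ ((r : ℝ) + s - j + k)))
        + c r s (j+1) 0 * w ^ ((r : ℝ) - s - (0:ℕ)) * (1 - w) ^ ((r : ℝ) + s - (j+1:ℕ) + (0:ℕ)) := by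
    rw [h, Finset.sum_range_succ']
    exact congrArg₂ (· + ·) (Finset.sum_congr rfl fun k _ => hG1 k) rfl
  rw [hsplit]
  rw [Finset.sum_sub_distrib]
  have hlast : ∑ k ∈ Finset.range (j+1),
      c r s j (k+1) * (((r : ℝ) + s - j + (k+1)) * w ^ ((r : ℝ) - s - k - 1)) *
        (1 - w) ^ ((r : ℝ) + s - j + k)
      = ∑ k ∈ Finset.range j,
        c r s j (k+1) * (((r : ℝ) + s - j + (k+1)) * w ^ ((r : ℝ) - s - k - 1)) *
          (1 - w) ^ ((r : ℝ) + s - j + k) := by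
    rw [Finset.sum_range_succ, c_big r s (by omega : j < j + 1)]
    ring
  have hRHS2 : ∑ k ∈ Finset.range (j+1),
      c r s j k * w ^ ((r : ℝ) - s - k) * (((r : ℝ) + s - j + k) * (1 - w) ^ ((r : ℝ) + s - j + k - 1))
      = (∑ k ∈ Finset.range j,
          c r s j (k+1) * w ^ ((r : ℝ) - s - (k+1:ℕ)) *
            (((r : ℝ) + s - j + (k+1:ℕ)) * (1 - w) ^ ((r : ℝ) + s - j + (k+1:ℕ) - 1)))
        + c r s j 0 * w ^ ((r : ℝ) - s - (0:ℕ)) * (((r : ℝ) + s - j + (0:ℕ)) * (1 - w) ^ ((r : ℝ) + s - j + (0:ℕ) - 1)) := by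
    rw [Finset.sum_range_succ']
  rw [Finset.sum_sub_distrib, hlast, hRHS2]
  have e0 : ∀ k : ℕ, c r s j (k+1) * w ^ ((r : ℝ) - s - (k+1:ℕ)) *
      (((r : ℝ) + s - j + (k+1:ℕ)) * (1 - w) ^ ((r : ℝ) + s - j + (k+1:ℕ) - 1))
      = c r s j (k+1) * (((r : ℝ) + s - j + (k+1)) * w ^ ((r : ℝ) - s - k - 1)) *
        (1 - w) ^ ((r : ℝ) + s - j + k) := by
    intro k
    rw [show ((r : ℝ) - s - (k+1:ℕ)) = (r : ℝ) - s - k - 1 by push_cast; ring]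
    rw [show ((r : ℝ) + s - j + (k+1:ℕ) - 1) = (r : ℝ) + s - j + k by push_cast; ring]
    push_cast
    ring
  rw [Finset.sum_congr rfl fun k _ => e0 k]
  rw [c_zero]
  rw [show ((r : ℝ) + s - (j+1:ℕ) + (0:ℕ)) = (r : ℝ) + s - j + (0:ℕ) - 1 by push_cast; ring]
  push_cast
  ring

lemma h_hasDerivAt (j : ℕ) {w : ℝ} (hw : w ∈ Set.Ioo (0:ℝ) 1) :
    HasDerivAt (h r s j) (h r s (j + 1) w) w := by
  have hw0 : w ≠ 0 := ne_of_gt hw.1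
  have hw1 : (1 : ℝ) - w ≠ 0 := by have := hw.2; intro h; nlinarith [hw.2]
  have key : ∀ k ∈ Finset.range (j+1),
      HasDerivAt (fun w : ℝ => c r s j k * w ^ ((r : ℝ) - s - k) * (1 - w) ^ ((r : ℝ) + s - j + k))
        (c r s j k * (((r : ℝ) - s - k) * w ^ ((r : ℝ) - s - k - 1)) *
            (1 - w) ^ ((r : ℝ) + s - j + k) -
          c r s j k * w ^ ((r : ℝ) - s - k) *
            (((r : ℝ) + s - j + k) * (1 - w) ^ ((r : ℝ) + s - j + k - 1))) w := by
    intro k _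
    have h1 : HasDerivAt (fun w : ℝ => c r s j k * w ^ ((r : ℝ) - s - k))
        (c r s j k * (((r : ℝ) - s - k) * w ^ ((r : ℝ) - s - k - 1))) w :=
      (Real.hasDerivAt_rpow_const (Or.inl hw0)).const_mul _
    have h2 : HasDerivAt (fun w : ℝ => (1 - w) ^ ((r : ℝ) + s - j + k))
        (-1 * ((r : ℝ) + s - j + k) * (1 - w) ^ ((r : ℝ) + s - j + k - 1)) w := by
      have hb : HasDerivAt (fun w : ℝ => 1 - w) (-1 : ℝ) w := (hasDerivAt_id w).const_sub 1
      exact hb.rpow_const (Or.inl hw1)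
    have := h1.fun_mul h2
    refine this.congr_deriv ?_
    ring
  have H := HasDerivAt.fun_sum key
  rw [h_deriv_sum]
  exact H

lemma h_continuousAt (hs0 : 0 < s) (hs1 : s < 1) {j : ℕ} (hj : j < r) (w0 : ℝ) :
    ContinuousAt (h r s j) w0 := by
  unfold h ContinuousAt
  apply tendsto_finset_sum
  intro k hk
  have hkj : k ≤ j := by simpa [Nat.lt_succ_iff] using hk
  have hkr : (k : ℝ) + 1 ≤ r := by exact_mod_cast (by omega : k + 1 ≤ r)
  have hp : (0:ℝ) ≤ (r : ℝ) - s - k := by linarith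
  have hq : (0:ℝ) ≤ (r : ℝ) + s - j + k := by
    have hjr : (j : ℝ) + 1 ≤ r := by exact_mod_cast (by omega : j + 1 ≤ r)
    have hk0 : (0:ℝ) ≤ k := Nat.cast_nonneg k
    linarith
  exact ((continuousAt_const.mul
    (Real.continuousAt_rpow_const w0 _ (Or.inr hp))).mul
    ((continuousAt_const.sub continuousAt_id).rpow_const (Or.inr hq)))

lemma h_zero_at_zero (hs0 : 0 < s) (hs1 : s < 1) {j : ℕ} (hj : j < r) :
    h r s j 0 = 0 := by
  unfold h
  apply Finset.sum_eq_zero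
  intro k hk
  have hkj : k ≤ j := by simpa [Nat.lt_succ_iff] using hk
  have hkr : (k : ℝ) + 1 ≤ r := by exact_mod_cast (by omega : k + 1 ≤ r)
  rw [Real.zero_rpow (by intro hc; rw [sub_eq_zero] at hc; nlinarith : (r : ℝ) - s - k ≠ 0)]
  ring

lemma h_zero_at_one (hs0 : 0 < s) (hs1 : s < 1) {j : ℕ} (hj : j < r) :
    h r s j 1 = 0 := by
  unfold h
  apply Finset.sum_eq_zero
  intro k hk
  have hjr : (j : ℝ) + 1 ≤ r := by exact_mod_cast (by omega : j + 1 ≤ r)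
  have hk0 : (0:ℝ) ≤ k := Nat.cast_nonneg k
  have hq : (r : ℝ) + s - j + k ≠ 0 := by
    have : (0:ℝ) < (r : ℝ) + s - j + k := by linarith
    exact ne_of_gt this
  rw [show (1:ℝ) - 1 = 0 by ring, Real.zero_rpow hq]
  ring

lemma tendsto_right (hs0 : 0 < s) (hs1 : s < 1) {j : ℕ} (hj : j < r) {a : ℝ}
    (ha : h r s j a = 0) : Filter.Tendsto (h r s j) (nhdsWithin a (Set.Ioi a)) (nhds 0) := by
  have := (h_continuousAt r s hs0 hs1 hj a)
  rw [ContinuousAt, ha] at this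
  exact this.mono_left nhdsWithin_le_nhds

lemma tendsto_left (hs0 : 0 < s) (hs1 : s < 1) {j : ℕ} (hj : j < r) {a : ℝ}
    (ha : h r s j a = 0) : Filter.Tendsto (h r s j) (nhdsWithin a (Set.Iio a)) (nhds 0) := by
  have := (h_continuousAt r s hs0 hs1 hj a)
  rw [ContinuousAt, ha] at this
  exact this.mono_left nhdsWithin_le_nhds

lemma exists_zeros (hs0 : 0 < s) (hs1 : s < 1) :
    ∀ j : ℕ, j ≤ r → ∃ x : Fin j → ℝ, StrictMono x ∧ (∀ i, x i ∈ Set.Ioo (0:ℝ) 1) ∧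
      ∀ i, h r s j (x i) = 0 := by
  intro j
  induction j with
  | zero =>
    exact fun _ => ⟨Fin.elim0, fun a => a.elim0, fun i => i.elim0, fun i => i.elim0⟩
  | succ j IH =>
    intro hj1
    have hjr : j < r := hj1
    obtain ⟨x, hx_mono, hx_mem, hx_zero⟩ := IH (by omega)
    set y : Fin (j + 2) → ℝ := fun i =>
      if h0 : (i : ℕ) = 0 then 0 else if hi : (i : ℕ) ≤ j then x ⟨(i : ℕ) - 1, by omega⟩ else 1
      with hy
    have hy_mem : ∀ i : Fin (j + 2), 0 ≤ y i ∧ y i ≤ 1 := by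
      intro i
      rw [hy]
      dsimp only
      split_ifs with h1 h2
      · norm_num
      · exact ⟨le_of_lt (hx_mem _).1, le_of_lt (hx_mem _).2⟩
      · norm_num
    have hadj : ∀ i : Fin (j + 1), y i.castSucc < y i.succ := by
      intro i
      have hic : (i.castSucc : ℕ) = (i : ℕ) := Fin.coe_castSucc i
      have his : (i.succ : ℕ) = (i : ℕ) + 1 := Fin.val_succ i
      have hlt : (i : ℕ) < j + 1 := i.isLt
      rw [hy]
      dsimp only
      simp only [hic, his]
      split_ifs with h1 h2 h3 h4 h5 h6 h7
      all_goals try exact False.elim (by assumption)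
      all_goals try omega
      all_goals try norm_num
      all_goals try exact (hx_mem _).1
      all_goals try exact (hx_mem _).2
      all_goals (apply hx_mono; simp only [Fin.lt_def]; omega)
    have hta : ∀ i : Fin (j + 1),
        Filter.Tendsto (h r s j) (nhdsWithin (y i.castSucc) (Set.Ioi (y i.castSucc))) (nhds 0) := by
      intro i
      have hic : (i.castSucc : ℕ) = (i : ℕ) := Fin.coe_castSucc i
      rcases Nat.eq_zero_or_pos (i : ℕ) with h0 | h0
      · have hyv : y i.castSucc = 0 := by rw [hy]; dsimp only; simp only [hic]; rw [dif_pos h0]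
        rw [hyv]
        exact tendsto_right r s hs0 hs1 hjr (h_zero_at_zero r s hs0 hs1 hjr)
      · have hyv : y i.castSucc = x ⟨(i : ℕ) - 1, by omega⟩ := by
          rw [hy]; dsimp only; simp only [hic]; rw [dif_neg (by omega), dif_pos (by omega : (i:ℕ) ≤ j)]
        rw [hyv]
        exact tendsto_right r s hs0 hs1 hjr (hx_zero _)
    have htb : ∀ i : Fin (j + 1),
        Filter.Tendsto (h r s j) (nhdsWithin (y i.succ) (Set.Iio (y i.succ))) (nhds 0) := by
      intro i
      have his : (i.succ : ℕ) = (i : ℕ) + 1 := Fin.val_succ i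
      rcases Nat.lt_or_ge (i : ℕ) j with h0 | h0
      · have hyv : y i.succ = x ⟨(i : ℕ), by omega⟩ := by
          rw [hy]; dsimp only
          simp only [his]; rw [dif_neg (by omega), dif_pos (by omega : (i:ℕ) + 1 ≤ j)]
          simp only [Nat.add_sub_cancel]
        rw [hyv]
        exact tendsto_left r s hs0 hs1 hjr (hx_zero _)
      · have hyv : y i.succ = 1 := by
          rw [hy]; dsimp only; simp only [his]; rw [dif_neg (by omega), dif_neg (by omega)]
        rw [hyv]
        exact tendsto_left r s hs0 hs1 hjr (h_zero_at_one r s hs0 hs1 hjr)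
    have key : ∀ i : Fin (j + 1), ∃ z ∈ Set.Ioo (y i.castSucc) (y i.succ),
        h r s (j + 1) z = 0 := by
      intro i
      have hsub : Set.Ioo (y i.castSucc) (y i.succ) ⊆ Set.Ioo (0:ℝ) 1 :=
        Set.Ioo_subset_Ioo (hy_mem _).1 (hy_mem _).2
      exact exists_hasDerivAt_eq_zero' (hadj i) (hta i) (htb i)
        (fun w hw => h_hasDerivAt r s j (hsub hw))
    choose z hz1 hz2 using key
    have hz_mem : ∀ i, z i ∈ Set.Ioo (0:ℝ) 1 := fun i =>
      Set.Ioo_subset_Ioo (hy_mem _).1 (hy_mem _).2 (hz1 i)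
    refine ⟨z, ?_, hz_mem, hz2⟩
    rw [Fin.strictMono_iff_lt_succ]
    intro i
    have h1 : z i.castSucc < y i.castSucc.succ := (hz1 i.castSucc).2
    have h2 : y i.succ.castSucc < z i.succ := (hz1 i.succ).1
    rw [Fin.succ_castSucc] at h1
    exact lt_trans h1 h2

lemma AB_eq (hs1 : s < 1) : ∀ j : ℕ, j ≤ r →
    A r s (r - j) * B r s j * ∏ i ∈ Finset.range j, ((i : ℝ) + 1 - s)
      = A r s r * ∏ i ∈ Finset.range j, ((r : ℝ) - i + s) := by
  intro j
  induction j with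
  | zero => intro _; simp [B]
  | succ j IH =>
    intro hj1
    have hj' : j ≤ r := by omega
    have this := IH hj'
    have e1 : r - j = (r - (j + 1)) + 1 := by omega
    have e2 : ((r - (j + 1) : ℕ) : ℝ) = (r : ℝ) - j - 1 := by
      rw [Nat.cast_sub (by omega)]; push_cast; ring
    have hA : A r s (r - j) = A r s (r - (j + 1)) * ((j : ℝ) + 1 - s) := by
      rw [e1, A, Finset.prod_range_succ, ← A, e2]; ring
    have hB : B r s (j + 1) = B r s j * ((r : ℝ) + s - j) := by
      rw [B, Finset.prod_range_succ, ← B]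
    rw [hB, Finset.prod_range_succ, Finset.prod_range_succ]
    push_cast
    linear_combination ((r : ℝ) + s - j) * this
      - (B r s j * (((r : ℝ) + s - j) * ∏ i ∈ Finset.range j, ((i : ℝ) + 1 - s))) * hA

lemma h_r_eq {w : ℝ} (hw : w ∈ Set.Ioo (0:ℝ) 1) :
    h r s r w = w ^ (-s) * (1 - w) ^ s *
      ∑ k ∈ Finset.range (r + 1), c r s r k * w ^ (r - k) * (1 - w) ^ k := by
  have hw0 : (0:ℝ) < w := hw.1
  have hw1 : (0:ℝ) < 1 - w := by have := hw.2; linarith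
  rw [h, Finset.mul_sum]
  apply Finset.sum_congr rfl
  intro k hk
  have hkr : k ≤ r := by simpa [Nat.lt_succ_iff] using hk
  have e1 : (r : ℝ) - s - k = -s + ((r - k : ℕ) : ℝ) := by
    rw [Nat.cast_sub hkr]; ring
  have e2 : (r : ℝ) + s - r + k = s + (k : ℝ) := by ring
  rw [e1, e2, Real.rpow_add hw0, Real.rpow_add hw1, Real.rpow_natCast, Real.rpow_natCast]
  ring

lemma Xcoef_cast (m n : ℕ) (hm : 0 < m) (hmn : m < n) (j : ℕ) :
    ((Xcoef m n r j : ℚ) : ℝ) =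
      (r.choose j : ℝ) *
        ∏ i ∈ Finset.range j, (((r : ℝ) - i + (m : ℝ) / n) / ((i : ℝ) + 1 - (m : ℝ) / n)) := by
  have hn0 : (0:ℝ) < n := by exact_mod_cast (by omega : 0 < n)
  have hmn' : (m : ℝ) < n := by exact_mod_cast hmn
  unfold Xcoef
  push_cast
  congr 1
  apply Finset.prod_congr rfl
  intro i _
  have hd1 : ((i : ℝ) + 1) * n - m ≠ 0 := by nlinarith [Nat.cast_nonneg (α := ℝ) i]
  have hd2 : (i : ℝ) + 1 - (m : ℝ) / n ≠ 0 := by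
    have h1 : (m : ℝ) / n < 1 := (div_lt_one hn0).2 hmn'
    have h2 : (0:ℝ) ≤ i := Nat.cast_nonneg i
    intro hc; rw [sub_eq_zero] at hc; linarith
  field_simp

lemma Q_eq (m n : ℕ) (hm : 0 < m) (hmn : m < n) {w : ℝ} (hw : w ∈ Set.Ioo (0:ℝ) 1) :
    ∑ k ∈ Finset.range (r + 1), c r ((m:ℝ)/n) r k * w ^ (r - k) * (1 - w) ^ k
      = A r ((m:ℝ)/n) r * (1 - w) ^ r * XfunR m n r (w / (w - 1)) := by
  set s : ℝ := (m : ℝ) / n with hs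
  have hn0 : (0:ℝ) < n := by exact_mod_cast (by omega : 0 < n)
  have hs0 : 0 < s := div_pos (by exact_mod_cast hm) hn0
  have hs1 : s < 1 := (div_lt_one hn0).2 (by exact_mod_cast hmn)
  have hw0 : (0:ℝ) < w := hw.1
  have hw1 : (0:ℝ) < 1 - w := by have := hw.2; linarith
  have hw1' : (1:ℝ) - w ≠ 0 := ne_of_gt hw1
  have hwm : w - 1 ≠ 0 := by intro hc; apply hw1'; linarith [sub_eq_zero.mp hc]
  rw [XfunR, Finset.mul_sum, ← Finset.sum_range_reflect]
  apply Finset.sum_congr rfl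
  intro j hj
  have hjr : j ≤ r := by simpa [Nat.lt_succ_iff] using hj
  simp only [Nat.add_sub_cancel]
  have hrrj : r - (r - j) = j := by omega
  have hsgn : ((-1:ℝ)) ^ r * ((-1:ℝ)) ^ (r - j) = ((-1:ℝ)) ^ j := by
    rw [← pow_add, show r + (r - j) = 2 * (r - j) + j by omega, pow_add, pow_mul]
    norm_num
  have hP : (∏ i ∈ Finset.range j, ((i : ℝ) + 1 - s)) ≠ 0 := by
    apply Finset.prod_ne_zero_iff.2
    intro i _
    have : (0:ℝ) ≤ i := Nat.cast_nonneg i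
    intro hc; rw [sub_eq_zero] at hc; linarith
  have hAB : A r s (r - j) * B r s j =
      A r s r * (∏ i ∈ Finset.range j, ((r : ℝ) - i + s)) /
        (∏ i ∈ Finset.range j, ((i : ℝ) + 1 - s)) := by
    rw [eq_div_iff hP]
    linarith [AB_eq r s hs1 j hjr]
  have hX : ((Xcoef m n r j : ℚ) : ℝ) = (r.choose j : ℝ) *
      ((∏ i ∈ Finset.range j, ((r : ℝ) - i + s)) /
        (∏ i ∈ Finset.range j, ((i : ℝ) + 1 - s))) := by
    rw [Xcoef_cast r m n hm hmn j, ← Finset.prod_div_distrib]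
  have hpow : (1 - w) ^ r = (1 - w) ^ j * (1 - w) ^ (r - j) := by
    rw [← pow_add, show j + (r - j) = r by omega]
  have hsq : ((-1:ℝ)) ^ j * ((-1:ℝ)) ^ j = 1 := by
    rw [← pow_add, ← two_mul, pow_mul]; norm_num
  have hdiv : (w / (w - 1)) ^ j = ((-1:ℝ)) ^ j * w ^ j / (1 - w) ^ j := by
    have hneg : (w - 1) ^ j = ((-1:ℝ)) ^ j * (1 - w) ^ j := by
      rw [show w - 1 = -(1 - w) by ring, neg_pow]
    rw [div_pow, hneg, div_eq_div_iff
      (mul_ne_zero (pow_ne_zero _ (by norm_num)) (pow_ne_zero _ hw1')) (pow_ne_zero j hw1')]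
    linear_combination (-(w ^ j * (1 - w) ^ j)) * hsq
  have hAB0 := AB_eq r s hs1 j hjr
  rw [c, hrrj, Nat.choose_symm hjr, hsgn, hX, hpow, hdiv]
  field_simp
  linear_combination (r.choose j : ℝ) * hAB0

end

end Stmt10Aux



theorem stmt_10 (m n r : ℕ) (hm : 0 < m) (hmn : 2 * m < n) (hcop : Nat.Coprime m n)
    (hr : 1 ≤ r) :
    (XpolyC m n r).roots.card = r ∧
      ∀ z ∈ (XpolyC m n r).roots, ∃ x : ℝ, x < 0 ∧ z = (x : ℂ) := by
  have hn3 : 0 < n := by omega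
  have hmn1 : m < n := by omega
  have hn0 : (0:ℝ) < n := by exact_mod_cast hn3
  set s : ℝ := (m : ℝ) / n with hsdef
  have hs0 : 0 < s := div_pos (by exact_mod_cast hm) hn0
  have hs1 : s < 1 := (div_lt_one hn0).2 (by exact_mod_cast hmn1)
  obtain ⟨x, hx_mono, hx_mem, hx_zero⟩ := Stmt10Aux.exists_zeros r s hs0 hs1 r le_rfl
  have hA_ne : Stmt10Aux.A r s r ≠ 0 := by
    apply Finset.prod_ne_zero_iff.2
    intro i hi
    have hir : (i : ℝ) + 1 ≤ r := by
      exact_mod_cast Nat.succ_le_of_lt (Finset.mem_range.1 hi)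
    intro hc
    linarith [hc]
  have hroot : ∀ i : Fin r, XfunR m n r (x i / (x i - 1)) = 0 := by
    intro i
    have hw := hx_mem i
    have h1w : (0:ℝ) < 1 - x i := by have := hw.2; linarith
    have hQ : ∑ k ∈ Finset.range (r + 1),
        Stmt10Aux.c r s r k * (x i) ^ (r - k) * (1 - x i) ^ k = 0 := by
      have h0 := hx_zero i
      rw [Stmt10Aux.h_r_eq r s hw] at h0
      have hp1 : (0:ℝ) < (x i) ^ (-s) := Real.rpow_pos_of_pos hw.1 _
      have hp2 : (0:ℝ) < (1 - x i) ^ s := Real.rpow_pos_of_pos h1w _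
      have hmul : (x i) ^ (-s) * (1 - x i) ^ s ≠ 0 :=
        mul_ne_zero (ne_of_gt hp1) (ne_of_gt hp2)
      exact (mul_eq_zero.1 h0).resolve_left hmul
    rw [Stmt10Aux.Q_eq r m n hm hmn1 hw] at hQ
    have hp3 : ((1:ℝ) - x i) ^ r ≠ 0 := pow_ne_zero _ (ne_of_gt h1w)
    exact (mul_eq_zero.1 hQ).resolve_left (mul_ne_zero hA_ne hp3)
  set z : Fin r → ℝ := fun i => x i / (x i - 1) with hzdef
  have hz_neg : ∀ i, z i < 0 := by
    intro i
    have hw := hx_mem i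
    exact div_neg_of_pos_of_neg hw.1 (by linarith [hw.2])
  have hz_inj : Function.Injective z := by
    intro i k hik
    apply hx_mono.injective
    have hi1 : x i - 1 ≠ 0 := by have := (hx_mem i).2; intro hc; rw [sub_eq_zero] at hc; linarith
    have hk1 : x k - 1 ≠ 0 := by have := (hx_mem k).2; intro hc; rw [sub_eq_zero] at hc; linarith
    have h2 : x i / (x i - 1) = x k / (x k - 1) := hik
    rw [div_eq_div_iff hi1 hk1] at h2
    nlinarith [h2]
  have hlead : Xcoef m n r r ≠ 0 := by
    unfold Xcoef
    apply mul_ne_zero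
    · simp
    · apply Finset.prod_ne_zero_iff.2
      intro i hi
      have hir : (i : ℚ) + 1 ≤ r := by
        exact_mod_cast Nat.succ_le_of_lt (Finset.mem_range.1 hi)
      have hmq : (0:ℚ) < m := by exact_mod_cast hm
      have hnq : (m:ℚ) < n := by exact_mod_cast hmn1
      have hnq0 : (0:ℚ) < n := by exact_mod_cast hn3
      apply div_ne_zero
      · nlinarith
      · nlinarith
  have hcoeffr : (XpolyC m n r).coeff r = (Xcoef m n r r : ℂ) := by
    unfold XpolyC
    rw [Polynomial.finset_sum_coeff]
    simp only [Polynomial.coeff_C_mul, Polynomial.coeff_X_pow]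
    rw [Finset.sum_eq_single r]
    · simp
    · intro k _ hk; simp [Ne.symm hk]
    · intro hk; exact absurd (Finset.self_mem_range_succ r) hk
  have hleadC : (XpolyC m n r).coeff r ≠ 0 := by
    rw [hcoeffr]
    exact_mod_cast hlead
  have hne : XpolyC m n r ≠ 0 := fun hc => hleadC (by rw [hc]; simp)
  have hdegle : (XpolyC m n r).natDegree ≤ r := by
    unfold XpolyC
    apply Polynomial.natDegree_sum_le_of_forall_le
    intro k hk
    refine le_trans (Polynomial.natDegree_C_mul_le _ _) ?_
    rw [Polynomial.natDegree_X_pow]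
    exact Nat.lt_succ_iff.1 (Finset.mem_range.1 hk)
  have hdeg : (XpolyC m n r).natDegree = r :=
    le_antisymm hdegle (Polynomial.le_natDegree_of_ne_zero hleadC)
  have hcard : (XpolyC m n r).roots.card = r := by
    have hsp : (XpolyC m n r).Splits := IsAlgClosed.splits _
    have hh := Polynomial.Splits.natDegree_eq_card_roots hsp
    rw [← hh, hdeg]
  have heval : ∀ t : ℝ, (XpolyC m n r).eval (t : ℂ) = ((XfunR m n r t : ℝ) : ℂ) := by
    intro t
    unfold XpolyC XfunR
    rw [Polynomial.eval_finset_sum]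
    push_cast
    simp
  have hrootsC : ∀ i, ((z i : ℝ) : ℂ) ∈ (XpolyC m n r).roots := by
    intro i
    rw [Polynomial.mem_roots hne]
    show (XpolyC m n r).eval _ = 0
    rw [heval (z i)]
    have : XfunR m n r (z i) = 0 := hroot i
    rw [this]
    norm_num
  set M : Multiset ℂ := Multiset.map (fun i => ((z i : ℝ) : ℂ)) Finset.univ.val with hMdef
  have hMnodup : M.Nodup := by
    apply Multiset.Nodup.map
    · intro i k hik
      simp only at hik
      exact hz_inj (by exact_mod_cast hik)
    · exact Finset.univ.nodup
  have hMcard : Multiset.card M = r := by rw [hMdef, Multiset.card_map]; simp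
  have hMle : M ≤ (XpolyC m n r).roots := by
    rw [Multiset.le_iff_subset hMnodup]
    intro a ha
    obtain ⟨i, _, rfl⟩ := Multiset.mem_map.1 ha
    exact hrootsC i
  have hEq : M = (XpolyC m n r).roots :=
    Multiset.eq_of_le_of_card_le hMle (by rw [hMcard, hcard])
  refine ⟨hcard, ?_⟩
  intro zz hzz
  rw [← hEq] at hzz
  obtain ⟨i, _, rfl⟩ := Multiset.mem_map.1 hzz
  exact ⟨z i, hz_neg i, rfl⟩
end
end

section
/- For every z ∈ ℂ with |z| ≤ 2, |1 − √(1+z)| ≥ ((√3 − 1)/2)·|z|, where √(1+z) denotes the principal square root of 1+z. -/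
open Finset MeasureTheory

noncomputable section

theorem stmt_17 (z : ℂ) (hz : ‖z‖ ≤ 2) :
    (Real.sqrt 3 - 1) / 2 * ‖z‖ ≤
      ‖1 - (1 + z) ^ (1/2 : ℂ)‖ := by
  set w := (1 + z) ^ (1/2 : ℂ) with hwdef
  have hw2 : w ^ 2 = 1 + z := by
    rw [hwdef, show (1/2 : ℂ) = ((2:ℕ):ℂ)⁻¹ by norm_num]
    exact Complex.cpow_nat_inv_pow _ (by norm_num)
  have hsq : Real.sqrt 3 ^ 2 = 3 := Real.sq_sqrt (by norm_num)
  have hs0 : (0:ℝ) ≤ Real.sqrt 3 := Real.sqrt_nonneg 3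
  have hs1 : (1:ℝ) ≤ Real.sqrt 3 := by nlinarith
  have habsw : ‖w‖ ≤ Real.sqrt 3 := by
    have h1 : (‖w‖) ^ 2 ≤ 3 := by
      rw [← norm_pow, hw2]
      calc ‖1 + z‖ ≤ ‖(1:ℂ)‖ + ‖z‖ := norm_add_le _ _
        _ ≤ 3 := by simp; linarith
    nlinarith [norm_nonneg w]
  have hzeq : z = (w + 1) * (w - 1) := by linear_combination -hw2
  have habz : ‖z‖ = ‖w + 1‖ * ‖1 - w‖ := by
    rw [hzeq, norm_mul, ← norm_neg (w - 1)]
    ring_nf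
  have h1 : ‖w + 1‖ ≤ Real.sqrt 3 + 1 := by
    calc ‖w + 1‖ ≤ ‖w‖ + ‖(1:ℂ)‖ := norm_add_le _ _
      _ ≤ Real.sqrt 3 + 1 := by simp [habsw]
  have hB : (0:ℝ) ≤ ‖1 - w‖ := norm_nonneg _
  rw [habz]
  nlinarith [mul_le_mul_of_nonneg_right h1 hB]
end
end

section
/- Let m, n, r be integers with 0 < m < n/2 and r ≥ 1. Then ∏_{i=1}^{r} (i·n − m) > (n/4)^r · ∏_{i=1}^{r} (r + i); equivalently, (n−m)(2n−m)⋯(rn−m) / ((r+1)(r+2)⋯(2r)) > (n/4)^r. -/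
open Finset MeasureTheory

noncomputable section

lemma asc_gen (a : ℕ) : ∀ r : ℕ, ∏ i ∈ Finset.range r, (a + i) = a.ascFactorial r
  | 0 => by simp
  | r + 1 => by rw [Finset.prod_range_succ, asc_gen a r, Nat.ascFactorial_succ, mul_comm]

lemma prod_asc (r : ℕ) : ∏ i ∈ Finset.range r, ((r:ℝ) + 1 + i) =
    ((2 * r).factorial : ℝ) / r.factorial := by
  have h : r.factorial * (r + 1).ascFactorial r = (2 * r).factorial := by
    rw [Nat.factorial_mul_ascFactorial]; ring_nf
  have h2 : ∏ i ∈ Finset.range r, ((r:ℝ) + 1 + i) = ((r + 1).ascFactorial r : ℝ) := by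
    rw [← asc_gen (r+1) r]; push_cast; rfl
  rw [h2, eq_div_iff (by positivity : (r.factorial : ℝ) ≠ 0), ← h]
  push_cast; ring

lemma odd_prod (r : ℕ) :
    (∏ i ∈ Finset.range r, (2 * (i : ℝ) + 1)) * (2 ^ r * r.factorial) =
      (2 * r).factorial := by
  induction r with
  | zero => simp
  | succ k ih =>
    rw [Finset.prod_range_succ]
    have h2 : 2 * (k + 1) = (2 * k + 1) + 1 := by ring
    rw [h2, Nat.factorial_succ, Nat.factorial_succ, Nat.factorial_succ]
    push_cast
    push_cast at ih
    linear_combination (2*(k:ℝ)+1)*(2*(k:ℝ)+2)*ih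

theorem stmt_19 (m n r : ℕ) (hm : 0 < m) (hmn : 2 * m < n) (hr : 1 ≤ r) :
    ((n : ℝ) / 4) ^ r * ∏ i ∈ Finset.range r, ((r : ℝ) + i + 1) <
      ∏ i ∈ Finset.range r, (((i : ℝ) + 1) * n - m) := by
  have hn0 : 0 < n := by omega
  have hn : (0:ℝ) < n := by exact_mod_cast hn0
  have hmn' : (2 * m : ℝ) < n := by exact_mod_cast hmn
  have key : ((n : ℝ) / 4) ^ r * ∏ i ∈ Finset.range r, ((r : ℝ) + i + 1) =
      ∏ i ∈ Finset.range r, ((2 * (i:ℝ) + 1) * n / 2) := by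
    have e1 : ∏ i ∈ Finset.range r, ((r : ℝ) + i + 1) =
        ∏ i ∈ Finset.range r, ((r:ℝ) + 1 + i) := by
      apply Finset.prod_congr rfl; intros; ring
    rw [e1, prod_asc]
    rw [Finset.prod_div_distrib, Finset.prod_mul_distrib, Finset.prod_const, Finset.prod_const]
    have h := odd_prod r
    have hf : (r.factorial : ℝ) ≠ 0 := by positivity
    field_simp
    have h4 : (2:ℝ)^r * 2^r = 4^r := by rw [← mul_pow]; norm_num
    simp only [Finset.card_range]
    have h5 : (1/4:ℝ)^r * 4^r = 1 := by rw [← mul_pow]; norm_num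
    linear_combination (-(n:ℝ)^r * (1/4:ℝ)^r * 2^r) * h + ((n:ℝ)^r * (∏ x ∈ Finset.range r, (2*(x:ℝ)+1)) * (r.factorial:ℝ) * (1/4:ℝ)^r) * h4 + ((n:ℝ)^r * (∏ x ∈ Finset.range r, (2*(x:ℝ)+1)) * (r.factorial:ℝ)) * h5
  rw [key]
  apply Finset.prod_lt_prod_of_nonempty
  · intro i _; positivity
  · intro i _
    have : (2 * m : ℝ) < n := hmn'
    have hi : (0:ℝ) ≤ (i:ℝ) := Nat.cast_nonneg i
    nlinarith [mul_le_mul_of_nonneg_left hmn'.le hi]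
  · exact Finset.nonempty_range_iff.mpr (by omega)
end
end
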